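/- Let A be a dependent adder in a category 𝒞 with finite limits. For every x : U → A, f : ⟦x⟧ → A, g : ⟦Σ^x f⟧ → A and h : ⟦Σ^x (f⊠g)⟧ → A, one has f ⊠ (g ⊠ h) = (f ⊠ g) ⊠ h, where f ⊠ g := Σ^f (g ∘ f♭). -/

import Mathlib

open CategoryTheory CategoryTheory.Limits

universe v u

/-- A dependent adder in a category `𝒞` with finite limits: an object `A`, a family
`p : F ⟶ A` (with `⟦x⟧ := pullback x p` for `x : U ⟶ A`), a unit `1_F : ⊤_ 𝒞 ⟶ F`,
natural dependent sum functions `Σ^x : (⟦x⟧ ⟶ A) → (U ⟶ A)` and flattening maps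
`f♭ : ⟦f⟧ ⟶ ⟦Σ^x f⟧` over `U`, satisfying the right unit, left unit, sum associativity
and flatten associativity axioms. -/
structure DependentAdder (𝒞 : Type u) [Category.{v} 𝒞] [HasFiniteLimits 𝒞] where
  /-- The underlying object. -/
  A : 𝒞
  /-- The total object of the family of index objects. -/
  F : 𝒞
  /-- The structural family map. -/
  p : F ⟶ A
  /-- The unit `1_F : * ⟶ F`; `1_A := 1_F ≫ p`. -/
  unit : ⊤_ 𝒞 ⟶ F
  /-- The dependent sum functions. -/
  sum : ∀ {U : 𝒞} (x : U ⟶ A), (pullback x p ⟶ A) → (U ⟶ A)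
  /-- Naturality of the dependent sums in `x ∈ 𝒞/A`. -/
  sum_natural : ∀ {U U' : 𝒞} (h : U ⟶ U') (y : U' ⟶ A) (g : pullback y p ⟶ A),
    h ≫ sum y g =
      sum (h ≫ y) (pullback.map (h ≫ y) p y p h (𝟙 F) (𝟙 A) (by simp) (by simp) ≫ g)
  /-- The flattening maps `f♭ : ⟦f⟧ ⟶ ⟦Σ^x f⟧`. -/
  flat : ∀ {U : 𝒞} (x : U ⟶ A) (f : pullback x p ⟶ A),
    pullback f p ⟶ pullback (sum x f) p
  /-- The flattening maps are morphisms over `U`. -/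
  flat_over : ∀ {U : 𝒞} (x : U ⟶ A) (f : pullback x p ⟶ A),
    flat x f ≫ pullback.fst (sum x f) p = pullback.fst f p ≫ pullback.fst x p
  /-- Right Unit Axiom: `Σ^x const_{1_A} = x`. -/
  right_unit : ∀ {U : 𝒞} (x : U ⟶ A),
    sum x (terminal.from (pullback x p) ≫ unit ≫ p) = x
  /-- Left Unit Axiom: `Σ^{const_{1_A}} (f ∘ (const_{1_A})♭) = f`. -/
  left_unit : ∀ {U : 𝒞} (x : U ⟶ A) (f : pullback x p ⟶ A),
    sum (terminal.from (pullback x p) ≫ unit ≫ p)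
      (flat x (terminal.from (pullback x p) ≫ unit ≫ p) ≫
        eqToHom (by rw [right_unit]) ≫ f) = f
  /-- Sum Associativity Axiom: `Σ^{Σ^x f} g = Σ^x (Σ^f (g ∘ f♭))`. -/
  sum_assoc : ∀ {U : 𝒞} (x : U ⟶ A) (f : pullback x p ⟶ A)
    (g : pullback (sum x f) p ⟶ A),
    sum (sum x f) g = sum x (sum f (flat x f ≫ g))
  /-- Flatten Associativity Axiom:
  `(g ∘ f♭)♭ ≫ (f⊠g)♭ = (f♭ ×_A id_F) ≫ g♭` (up to the canonical identification). -/
  flat_assoc : ∀ {U : 𝒞} (x : U ⟶ A) (f : pullback x p ⟶ A)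
    (g : pullback (sum x f) p ⟶ A),
    flat f (flat x f ≫ g) ≫ flat x (sum f (flat x f ≫ g)) =
      pullback.map (flat x f ≫ g) p g p (flat x f) (𝟙 F) (𝟙 A) (by simp) (by simp) ≫
        flat (sum x f) g ≫ eqToHom (by rw [sum_assoc])

variable {𝒞 : Type u} [Category.{v} 𝒞] [HasFiniteLimits 𝒞]

/-- The composition `f ⊠ g := Σ^f (g ∘ f♭)`. -/
noncomputable def DependentAdder.box (D : DependentAdder 𝒞) {U : 𝒞} (x : U ⟶ D.A)
    (f : pullback x D.p ⟶ D.A) (g : pullback (D.sum x f) D.p ⟶ D.A) :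
    pullback x D.p ⟶ D.A :=
  D.sum f (D.flat x f ≫ g)

/-- Associativity of the `⊠` composition: `f ⊠ (g ⊠ h) = (f ⊠ g) ⊠ h`, where `h`, a family
over `Σ^x (f ⊠ g)`, is regarded as a family over `Σ^{Σ^x f} g` via the canonical
identification given by the Sum Associativity Axiom. -/
theorem DependentAdder.box_assoc (D : DependentAdder 𝒞) {U : 𝒞} (x : U ⟶ D.A)
    (f : pullback x D.p ⟶ D.A) (g : pullback (D.sum x f) D.p ⟶ D.A)
    (h : pullback (D.sum x (D.box x f g)) D.p ⟶ D.A) :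
    D.box x f (D.box (D.sum x f) g
      (eqToHom (by rw [D.sum_assoc]; rfl) ≫ h)) =
      D.box x (D.box x f g) h := by
  unfold DependentAdder.box
  rw [D.sum_assoc f (D.flat x f ≫ g), D.sum_natural (D.flat x f) g]
  congr 2
  erw [← Category.assoc (D.flat f (D.flat x f ≫ g)), D.flat_assoc x f g]
  exact (Category.assoc _ _ _).trans (congrArg _ (Category.assoc _ _ _)) |>.symm
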